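/- Let τ ≥ ℵ₀ and let P and K be compact subsets of ℕ^τ. Then every homeomorphism between P and K can be extended to a homeomorphism of ℕ^τ onto itself. -/

import Mathlib

open Topology Set

universe u

/-- A continuous `ℤ`-valued function on a compact subset of `A → ℤ` depends only on
finitely many coordinates. -/
lemma finite_determination {A : Type u} {P : Set (A → ℤ)} (hP : IsCompact P)
    (g : ↥P → ℤ) (hg : Continuous g) :
    ∃ B : Finset A, ∀ p q : ↥P, (∀ b ∈ B, (p : A → ℤ) b = (q : A → ℤ) b) → g p = g q := by
  classical
  -- for each p, find a finite set of coordinates that pins down the value g p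
  have key : ∀ p : ↥P, ∃ I : Finset A,
      ∀ q : ↥P, (∀ b ∈ I, (q : A → ℤ) b = (p : A → ℤ) b) → g q = g p := by
    intro p
    have hop : IsOpen (g ⁻¹' {g p}) := (isOpen_discrete _).preimage hg
    rw [isOpen_induced_iff] at hop
    obtain ⟨W, hW, hWeq⟩ := hop
    have hpW : (p : A → ℤ) ∈ W := by
      have : p ∈ g ⁻¹' {g p} := rfl
      rw [← hWeq] at this; exact this
    rw [isOpen_pi_iff] at hW
    obtain ⟨I, u, hu, hsub⟩ := hW _ hpW
    refine ⟨I, fun q hq => ?_⟩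
    have hqW : (q : A → ℤ) ∈ W := by
      apply hsub
      intro a ha
      rw [hq a ha]
      exact (hu a ha).2
    have : q ∈ g ⁻¹' {g p} := by rw [← hWeq]; exact hqW
    exact this
  choose I hI using key
  -- the open boxes
  set U : ↥P → Set (A → ℤ) := fun p => {x | ∀ b ∈ I p, x b = (p : A → ℤ) b} with hU
  have hUopen : ∀ p, IsOpen (U p) := by
    intro p
    have : U p = ⋂ b ∈ I p, (fun x : A → ℤ => x b) ⁻¹' {(p : A → ℤ) b} := by
      ext x; simp [hU]
    rw [this]
    exact isOpen_biInter_finset fun b _ => (isOpen_discrete _).preimage (continuous_apply b)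
  have hcov : P ⊆ ⋃ p : ↥P, U p := by
    intro x hx
    exact mem_iUnion.2 ⟨⟨x, hx⟩, fun b _ => rfl⟩
  obtain ⟨t, ht⟩ := hP.elim_finite_subcover U hUopen hcov
  refine ⟨t.biUnion I, fun p q hpq => ?_⟩
  obtain ⟨p₀, hp₀t, hp₀⟩ := mem_iUnion₂.1 (ht p.2)
  have hpI : ∀ b ∈ I p₀, (p : A → ℤ) b = (p₀ : A → ℤ) b := hp₀
  have hqI : ∀ b ∈ I p₀, (q : A → ℤ) b = (p₀ : A → ℤ) b := by
    intro b hb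
    rw [← hpq b (Finset.mem_biUnion.2 ⟨p₀, hp₀t, hb⟩)]
    exact hpI b hb
  rw [hI p₀ p hpI, hI p₀ q hqI]

lemma ext_scalar {A : Type u} {P : Set (A → ℤ)} (hP : IsCompact P)
    (g : ↥P → ℤ) (hg : Continuous g) :
    ∃ G : (A → ℤ) → ℤ, Continuous G ∧ ∀ p : ↥P, G (p : A → ℤ) = g p := by
  classical
  obtain ⟨B, hB⟩ := finite_determination hP g hg
  set G : (A → ℤ) → ℤ := fun x =>
    if h : ∃ p : ↥P, ∀ b ∈ B, (p : A → ℤ) b = x b then g h.choose else 0 with hGdef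
  have hGagree : ∀ p : ↥P, G (p : A → ℤ) = g p := by
    intro p
    have h : ∃ q : ↥P, ∀ b ∈ B, (q : A → ℤ) b = (p : A → ℤ) b := ⟨p, fun _ _ => rfl⟩
    rw [hGdef]
    simp only [dif_pos h]
    exact hB _ _ h.choose_spec
  refine ⟨G, ?_, hGagree⟩
  -- G factors through restriction to B
  have hGloc : ∀ x y : A → ℤ, (∀ b ∈ B, x b = y b) → G x = G y := by
    intro x y hxy
    have hiff : (∃ p : ↥P, ∀ b ∈ B, (p : A → ℤ) b = x b) ↔
        (∃ p : ↥P, ∀ b ∈ B, (p : A → ℤ) b = y b) := by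
      constructor
      · rintro ⟨p, hp⟩; exact ⟨p, fun b hb => (hp b hb).trans (hxy b hb)⟩
      · rintro ⟨p, hp⟩; exact ⟨p, fun b hb => (hp b hb).trans (hxy b hb).symm⟩
    rw [hGdef]
    by_cases h : ∃ p : ↥P, ∀ b ∈ B, (p : A → ℤ) b = x b
    · have h' := hiff.1 h
      simp only [dif_pos h, dif_pos h']
      apply hB
      intro b hb
      rw [h.choose_spec b hb, h'.choose_spec b hb, hxy b hb]
    · simp only [dif_neg h, dif_neg (hiff.not.1 h)]
  set r : (A → ℤ) → (↥B → ℤ) := fun x b => x b with hr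
  set ext : (↥B → ℤ) → (A → ℤ) := fun v a => if ha : a ∈ B then v ⟨a, ha⟩ else 0 with hext
  have hfact : G = (G ∘ ext) ∘ r := by
    funext x
    apply hGloc
    intro b hb
    simp [hext, hr, hb]
  rw [hfact]
  exact (continuous_of_discreteTopology).comp (continuous_pi fun b => continuous_apply _)

/-- Vector version: continuous extension of maps into `A → ℤ`. -/
lemma ext_map {A : Type u} {P : Set (A → ℤ)} (hP : IsCompact P)
    (φ : ↥P → (A → ℤ)) (hφ : Continuous φ) :
    ∃ Φ : (A → ℤ) → (A → ℤ), Continuous Φ ∧ ∀ p : ↥P, Φ (p : A → ℤ) = φ p := by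
  have key : ∀ a : A, ∃ G : (A → ℤ) → ℤ, Continuous G ∧ ∀ p : ↥P, G (p : A → ℤ) = φ p a :=
    fun a => ext_scalar hP (fun p => φ p a) ((continuous_apply a).comp hφ)
  choose G hGc hGa using key
  exact ⟨fun x a => G a x, continuous_pi fun a => hGc a,
    fun p => funext fun a => hGa a p⟩

/-- A finite partial "identity into first factor" extends to a bijection `ℤ ≃ ℤ × ℤ`. -/
lemma beta_lemma (S : Set ℤ) (hS : S.Finite) :
    ∃ β : ℤ ≃ ℤ × ℤ, ∀ s ∈ S, β s = (s, 0) := by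
  classical
  set j : ℤ → ℤ × ℤ := fun s => (s, 0) with hj
  have hjinj : Function.Injective j := fun a b h => (Prod.mk.injEq _ _ _ _ ▸ h).1
  set T : Set (ℤ × ℤ) := j '' S with hT
  have hTfin : T.Finite := hS.image j
  have hScinf : (Sᶜ : Set ℤ).Infinite := hS.infinite_compl
  have hTcinf : (Tᶜ : Set (ℤ × ℤ)).Infinite := hTfin.infinite_compl
  have : Nonempty (↥(Sᶜ) ≃ ↥(Tᶜ)) := by
    have i1 : Infinite ↥(Sᶜ) := hScinf.to_subtype
    have i2 : Infinite ↥(Tᶜ) := hTcinf.to_subtype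
    obtain ⟨d1⟩ := nonempty_denumerable ↥(Sᶜ)
    obtain ⟨d2⟩ := nonempty_denumerable ↥(Tᶜ)
    exact ⟨(Denumerable.eqv _).trans (Denumerable.eqv _).symm⟩
  obtain ⟨c⟩ := this
  set β : ℤ ≃ ℤ × ℤ :=
    (Equiv.Set.sumCompl S).symm.trans
      (((Equiv.Set.image j S hjinj).sumCongr c).trans (Equiv.Set.sumCompl T)) with hβ
  refine ⟨β, fun s hs => ?_⟩
  have h1 : (Equiv.Set.sumCompl S).symm s = Sum.inl ⟨s, hs⟩ :=
    Equiv.Set.sumCompl_symm_apply_of_mem hs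
  simp [hβ, h1, Equiv.Set.image, Equiv.Set.imageOfInjOn]
  rfl

lemma key_int {A : Type u} (P K : Set (A → ℤ)) (hP : IsCompact P) (hK : IsCompact K)
    (f : ↥P ≃ₜ ↥K) :
    ∃ F : (A → ℤ) ≃ₜ (A → ℤ), ∀ p : ↥P, F (p : A → ℤ) = (f p : A → ℤ) := by
  classical
  -- continuous extensions of f and f.symm to all of X
  obtain ⟨ftil, hftc, hft⟩ := ext_map hP (fun p => (f p : A → ℤ))
    (continuous_subtype_val.comp f.continuous)
  obtain ⟨gtil, hgtc, hgt⟩ := ext_map hK (fun k => (f.symm k : A → ℤ))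
    (continuous_subtype_val.comp f.symm.continuous)
  -- the graph homeomorphisms of (A → ℤ) × (A → ℤ)
  set Φ : (A → ℤ) × (A → ℤ) ≃ₜ (A → ℤ) × (A → ℤ) :=
    { toFun := fun z => (z.1, z.2 + ftil z.1)
      invFun := fun z => (z.1, z.2 - ftil z.1)
      left_inv := fun z => by simp
      right_inv := fun z => by simp
      continuous_toFun := continuous_fst.prodMk
        (continuous_snd.add (hftc.comp continuous_fst))
      continuous_invFun := continuous_fst.prodMk
        (continuous_snd.sub (hftc.comp continuous_fst)) } with hΦ
  set Ψ : (A → ℤ) × (A → ℤ) ≃ₜ (A → ℤ) × (A → ℤ) :=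
    { toFun := fun z => (z.1 + gtil z.2, z.2)
      invFun := fun z => (z.1 - gtil z.2, z.2)
      left_inv := fun z => by simp
      right_inv := fun z => by simp
      continuous_toFun := (continuous_fst.add (hgtc.comp continuous_snd)).prodMk
        continuous_snd
      continuous_invFun := (continuous_fst.sub (hgtc.comp continuous_snd)).prodMk
        continuous_snd } with hΨ
  set H : (A → ℤ) × (A → ℤ) ≃ₜ (A → ℤ) × (A → ℤ) := Φ.trans (Ψ.symm.trans (Homeomorph.prodComm (A → ℤ) (A → ℤ))) with hH
  have hHp : ∀ p : ↥P, H ((p : A → ℤ), 0) = ((f p : A → ℤ), 0) := by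
    intro p
    have h1 : Φ ((p : A → ℤ), 0) = ((p : A → ℤ), (f p : A → ℤ)) := by
      show ((p : A → ℤ), 0 + ftil (p : A → ℤ)) = _
      rw [zero_add, hft p]
    have h2 : Ψ.symm ((p : A → ℤ), (f p : A → ℤ)) = (0, (f p : A → ℤ)) := by
      show ((p : A → ℤ) - gtil (f p : A → ℤ), (f p : A → ℤ)) = _
      rw [hgt (f p), f.symm_apply_apply, sub_self]
    show (Homeomorph.prodComm (A → ℤ) (A → ℤ)) (Ψ.symm (Φ ((p : A → ℤ), 0))) = _
    rw [h1, h2]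
    rfl
  -- the absorption homeomorphism e : (A → ℤ) ≃ₜ (A → ℤ) × (A → ℤ) fixing C := P ∪ K
  set C : Set (A → ℤ) := P ∪ K with hC
  have hCc : IsCompact C := hP.union hK
  have hSfin : ∀ a : A, ((fun x : (A → ℤ) => x a) '' C).Finite := fun a =>
    isCompact_iff_finite.1 (hCc.image (continuous_apply a))
  have hβ : ∀ a : A, ∃ β : ℤ ≃ ℤ × ℤ, ∀ s ∈ (fun x : (A → ℤ) => x a) '' C, β s = (s, 0) :=
    fun a => beta_lemma _ (hSfin a)
  choose β hβs using hβ
  set e1 : (A → ℤ) ≃ₜ (A → ℤ × ℤ) := Homeomorph.piCongrRight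
    (fun a => { toEquiv := β a,
                continuous_toFun := continuous_of_discreteTopology,
                continuous_invFun := continuous_of_discreteTopology }) with he1
  set e2 : (A → ℤ × ℤ) ≃ₜ (A → ℤ) × (A → ℤ) :=
    { toFun := fun x => (fun a => (x a).1, fun a => (x a).2)
      invFun := fun z a => (z.1 a, z.2 a)
      left_inv := fun x => rfl
      right_inv := fun z => rfl
      continuous_toFun := (continuous_pi fun a =>
          continuous_fst.comp (continuous_apply a)).prodMk
        (continuous_pi fun a => continuous_snd.comp (continuous_apply a))
      continuous_invFun := continuous_pi fun a =>
        ((continuous_apply a).comp continuous_fst).prodMk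
          ((continuous_apply a).comp continuous_snd) } with he2
  set e : (A → ℤ) ≃ₜ (A → ℤ) × (A → ℤ) := e1.trans e2 with he
  have heC : ∀ c ∈ C, e c = (c, (0 : A → ℤ)) := by
    intro c hc
    have h1 : ∀ a, β a (c a) = (c a, 0) := fun a => hβs a (c a) ⟨c, hc, rfl⟩
    show e2 (fun a => β a (c a)) = (c, 0)
    have : (fun a => β a (c a)) = fun a => (c a, (0 : ℤ)) := funext h1
    rw [this]
    rfl
  -- assemble
  refine ⟨e.trans (H.trans e.symm), fun p => ?_⟩
  show e.symm (H (e (p : A → ℤ))) = (f p : A → ℤ)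
  rw [heC (p : A → ℤ) (Or.inl p.2), hHp p, ← heC (f p : A → ℤ) (Or.inr (f p).2),
    Homeomorph.symm_apply_apply]

/-- **Corollary 1.2**: for `τ ≥ ℵ₀` (the index set `A` is infinite), every homeomorphism
between two compact subsets `P` and `K` of `ℕ^τ` can be extended to a homeomorphism of
`ℕ^τ` onto itself. -/
theorem stmt1 (A : Type u) [Infinite A]
    (P K : Set (A → ℕ)) (hP : IsCompact P) (hK : IsCompact K)
    (f : ↥P ≃ₜ ↥K) :
    ∃ F : (A → ℕ) ≃ₜ (A → ℕ), ∀ p : P, F (p : A → ℕ) = (f p : A → ℕ) := by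
  classical
  set ν : ℕ ≃ₜ ℤ :=
    { toEquiv := (Denumerable.eqv ℤ).symm
      continuous_toFun := continuous_of_discreteTopology
      continuous_invFun := continuous_of_discreteTopology } with hν
  set δ : (A → ℕ) ≃ₜ (A → ℤ) := Homeomorph.piCongrRight (fun _ => ν) with hδ
  set f' : ↥(⇑δ '' P) ≃ₜ ↥(⇑δ '' K) :=
    ((δ.image P).symm.trans f).trans (δ.image K) with hf'
  obtain ⟨F', hF'⟩ := key_int (⇑δ '' P) (⇑δ '' K)
    (hP.image δ.continuous) (hK.image δ.continuous) f'
  refine ⟨(δ.trans F').trans δ.symm, fun p => ?_⟩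
  show δ.symm (F' (δ (p : A → ℕ))) = (f p : A → ℕ)
  have hp' : δ (p : A → ℕ) ∈ ⇑δ '' P := mem_image_of_mem _ p.2
  have h1 := hF' ⟨δ (p : A → ℕ), hp'⟩
  have h2 : f' ⟨δ (p : A → ℕ), hp'⟩ = (δ.image K) (f p) := by
    show (δ.image K) (f ((δ.image P).symm ⟨δ (p : A → ℕ), hp'⟩)) = _
    congr 1
    have : (δ.image P) p = ⟨δ (p : A → ℕ), hp'⟩ := rfl
    rw [← this, Homeomorph.symm_apply_apply]
  rw [h1, h2]
  show δ.symm (δ (f p : A → ℕ)) = _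
  rw [Homeomorph.symm_apply_apply]
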